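/- Fix normalized static parameters θ̄ ∈ [0,1) (with θ := 1 − θ̄), ᾱ₁ > 0, x̄₁ ∈ [0,∞], and for each anchor supply y_a > 0 set ᾱ := ᾱ₁/y_a and x̄_U := x̄₁·y_a. Let (b_a, y_a) be an anchor point with θ̄·y_a < b_a < y_a and let ζ > 0. Then for every x ∈ [0, y_a], b(ζ·x; ζ·b_a, ζ·y_a) = ζ·b(x; b_a, y_a), where b(·; b_a, y_a) is the reserve value defined by the price curve with dynamic parameters chosen by the selection rule for the respective anchor point. -/

import Mathlib

/- P-AMM redemption curve with the selection rule for dynamic parameters.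
   Static parameters: `θbar` (target reserve ratio floor), `αbar` (lower bound
   on the decay slope), `xbarU : EReal` (upper bound on `x_U`, possibly `∞`). -/

noncomputable section

namespace PAMM

/-- The unconstrained minimal slope `α̂`. -/
def alphaHat (θbar ba ya : ℝ) : ℝ :=
  if (1 + θbar) / 2 ≤ ba / ya then 2 * (1 - ba / ya) / ya
  else (1 - θbar) ^ 2 / (2 * (ba - θbar * ya))

/-- The selected slope `α := max(ᾱ, α̂)`. -/
def alphaSel (θbar αbar ba ya : ℝ) : ℝ := max αbar (alphaHat θbar ba ya)

/-- The unconstrained maximal upper cutoff `x̂_U` for slope `α`. -/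
def xUHat (θbar α ba ya : ℝ) : ℝ :=
  if α * (ya - ba) ≤ (1 - θbar) ^ 2 / 2 then ya - Real.sqrt (2 * (ya - ba) / α)
  else ya - (ya - ba) / (1 - θbar) - (1 - θbar) / (2 * α)

/-- The selected upper cutoff `x_U := min(x̄_U, x̂_U)` (where `x̄_U ∈ [0,∞]`). -/
def xUSel (θbar αbar : ℝ) (xbarU : EReal) (ba ya : ℝ) : ℝ :=
  (min xbarU ((xUHat θbar (alphaSel θbar αbar ba ya) ba ya : ℝ) : EReal)).toReal

/-- The lower cutoff `x_L`. -/
def xLSel (θbar αbar : ℝ) (xbarU : EReal) (ba ya : ℝ) : ℝ :=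
  ya - Real.sqrt ((ya - xUSel θbar αbar xbarU ba ya) ^ 2
    - 2 * (ya - ba) / alphaSel θbar αbar ba ya)

/-- The three-piece marginal redemption price curve. -/
def priceCurve (α xU xL x : ℝ) : ℝ :=
  if x ≤ xU then 1 else if x ≤ xL then 1 - α * (x - xU) else 1 - α * (xL - xU)

/-- The reserve value `b(x; b_a, y_a) = b_a − ∫₀ˣ p(t; b_a, y_a) dt` where the dynamic
    parameters are chosen by the selection rule for the anchor point `(b_a, y_a)`. -/
def reserveB (θbar αbar : ℝ) (xbarU : EReal) (ba ya x : ℝ) : ℝ :=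
  ba - ∫ t in (0:ℝ)..x,
    priceCurve (alphaSel θbar αbar ba ya) (xUSel θbar αbar xbarU ba ya)
      (xLSel θbar αbar xbarU ba ya) t


/-- Lemma `lem:scaling`: with static bounds chosen relative to `y_a`
    (`ᾱ = ᾱ₁/y_a`, `x̄_U = x̄₁·y_a`), the reserve value scales:
    `b(ζx; ζb_a, ζy_a) = ζ·b(x; b_a, y_a)`. -/

lemma alphaHat_scale (θbar ba ya ζ : ℝ) (hζ : 0 < ζ) :
    alphaHat θbar (ζ * ba) (ζ * ya) = alphaHat θbar ba ya / ζ := by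
  unfold alphaHat
  rw [mul_div_mul_left ba ya hζ.ne']
  split_ifs with h
  · rw [mul_comm ζ ya, ← div_div]
  · rw [show 2 * (ζ * ba - θbar * (ζ * ya)) = (2 * (ba - θbar * ya)) * ζ by ring, ← div_div]

lemma alphaSel_scale (θbar αbar ba ya ζ : ℝ) (hζ : 0 < ζ) :
    alphaSel θbar (αbar / ζ) (ζ * ba) (ζ * ya) = alphaSel θbar αbar ba ya / ζ := by
  unfold alphaSel
  rw [alphaHat_scale θbar ba ya ζ hζ, div_eq_mul_inv αbar, div_eq_mul_inv (alphaHat θbar ba ya),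
    div_eq_mul_inv (max _ _), ← max_mul_of_nonneg _ _ (inv_nonneg.mpr hζ.le)]

lemma xUHat_scale (θbar α ba ya ζ : ℝ) (hζ : 0 < ζ) (hα : 0 < α) (hθ1 : θbar < 1) :
    xUHat θbar (α / ζ) (ζ * ba) (ζ * ya) = ζ * xUHat θbar α ba ya := by
  have hθ : (1:ℝ) - θbar ≠ 0 := by linarith
  unfold xUHat
  rw [show α / ζ * (ζ * ya - ζ * ba) = α * (ya - ba) by field_simp]
  split_ifs with h
  · rw [show 2 * (ζ * ya - ζ * ba) / (α / ζ) = ζ ^ 2 * (2 * (ya - ba) / α) by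
      field_simp]
    rw [Real.sqrt_mul (sq_nonneg ζ), Real.sqrt_sq hζ.le]
    ring
  · field_simp

lemma ereal_coe_min (a b : ℝ) : ((min a b : ℝ) : EReal) = min (a : EReal) (b : EReal) := by
  rcases le_total a b with h | h <;>
    simp [min_eq_left, min_eq_right, h, EReal.coe_le_coe_iff]

lemma xUSel_scale (θbar αbar ba ya ζ : ℝ) (xbar1 : EReal) (hζ : 0 < ζ) (hya : 0 < ya)
    (hαbar : 0 < αbar) (hθ1 : θbar < 1) (hxbar1 : 0 ≤ xbar1) :
    xUSel θbar (αbar / ζ) (xbar1 * (((ζ * ya : ℝ)) : EReal)) (ζ * ba) (ζ * ya)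
      = ζ * xUSel θbar αbar (xbar1 * ((ya : ℝ) : EReal)) ba ya := by
  have hα : 0 < alphaSel θbar αbar ba ya := lt_of_lt_of_le hαbar (le_max_left _ _)
  unfold xUSel
  rw [alphaSel_scale θbar αbar ba ya ζ hζ, xUHat_scale θbar _ ba ya ζ hζ hα hθ1]
  induction xbar1 using EReal.rec with
  | bot => exact absurd hxbar1 (by simp)
  | top =>
      rw [EReal.top_mul_of_pos (by exact_mod_cast mul_pos hζ hya),
        EReal.top_mul_of_pos (by exact_mod_cast hya)]
      simp [min_eq_right le_top, ← EReal.coe_mul]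
  | coe c =>
      rw [← EReal.coe_mul, ← EReal.coe_mul, ← ereal_coe_min, ← ereal_coe_min,
        EReal.toReal_coe, EReal.toReal_coe,
        show c * (ζ * ya) = ζ * (c * ya) by ring,
        show ζ * xUHat θbar (alphaSel θbar αbar ba ya) ba ya =
          ζ * xUHat θbar (alphaSel θbar αbar ba ya) ba ya from rfl]
      exact (mul_min_of_nonneg _ _ hζ.le).symm

lemma xLSel_scale (θbar αbar ba ya ζ : ℝ) (xbar1 : EReal) (hζ : 0 < ζ) (hya : 0 < ya)
    (hαbar : 0 < αbar) (hθ1 : θbar < 1) (hxbar1 : 0 ≤ xbar1) :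
    xLSel θbar (αbar / ζ) (xbar1 * (((ζ * ya : ℝ)) : EReal)) (ζ * ba) (ζ * ya)
      = ζ * xLSel θbar αbar (xbar1 * ((ya : ℝ) : EReal)) ba ya := by
  have hα : 0 < alphaSel θbar αbar ba ya := lt_of_lt_of_le hαbar (le_max_left _ _)
  unfold xLSel
  rw [alphaSel_scale θbar αbar ba ya ζ hζ,
    xUSel_scale θbar αbar ba ya ζ xbar1 hζ hya hαbar hθ1 hxbar1]
  rw [show (ζ * ya - ζ * xUSel θbar αbar (xbar1 * ((ya : ℝ) : EReal)) ba ya) ^ 2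
        - 2 * (ζ * ya - ζ * ba) / (alphaSel θbar αbar ba ya / ζ)
      = ζ ^ 2 * ((ya - xUSel θbar αbar (xbar1 * ((ya : ℝ) : EReal)) ba ya) ^ 2
        - 2 * (ya - ba) / alphaSel θbar αbar ba ya) by field_simp]
  rw [Real.sqrt_mul (sq_nonneg ζ), Real.sqrt_sq hζ.le]
  ring

lemma priceCurve_scale (α xU xL ζ t : ℝ) (hζ : 0 < ζ) :
    priceCurve (α / ζ) (ζ * xU) (ζ * xL) (ζ * t) = priceCurve α xU xL t := by
  unfold priceCurve
  simp only [mul_le_mul_iff_right₀ hζ]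
  split_ifs with h1 h2
  · rfl
  · field_simp
  · field_simp

theorem reserve_scaling
    (θbar αbar1 ya ba ζ : ℝ) (xbar1 : EReal)
    (hθ0 : 0 ≤ θbar) (hθ1 : θbar < 1) (hαbar1 : 0 < αbar1) (hxbar1 : 0 ≤ xbar1)
    (hya : 0 < ya) (hba0 : θbar * ya < ba) (hbaya : ba < ya) (hζ : 0 < ζ) :
    ∀ x ∈ Set.Icc (0:ℝ) ya,
      reserveB θbar (αbar1 / (ζ * ya)) (xbar1 * (((ζ * ya : ℝ)) : EReal)) (ζ * ba) (ζ * ya) (ζ * x)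
        = ζ * reserveB θbar (αbar1 / ya) (xbar1 * ((ya : ℝ) : EReal)) ba ya x := by
  intro x hx
  have hαbar : 0 < αbar1 / ya := div_pos hαbar1 hya
  have hrw : αbar1 / (ζ * ya) = (αbar1 / ya) / ζ := by
    rw [div_div, mul_comm]
  unfold reserveB
  rw [hrw, alphaSel_scale θbar (αbar1 / ya) ba ya ζ hζ,
    xUSel_scale θbar (αbar1 / ya) ba ya ζ xbar1 hζ hya hαbar hθ1 hxbar1,
    xLSel_scale θbar (αbar1 / ya) ba ya ζ xbar1 hζ hya hαbar hθ1 hxbar1]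
  have hint : (∫ t in (0:ℝ)..(ζ * x),
      priceCurve (alphaSel θbar (αbar1 / ya) ba ya / ζ)
        (ζ * xUSel θbar (αbar1 / ya) (xbar1 * ((ya : ℝ) : EReal)) ba ya)
        (ζ * xLSel θbar (αbar1 / ya) (xbar1 * ((ya : ℝ) : EReal)) ba ya) t)
      = ζ * ∫ s in (0:ℝ)..x,
      priceCurve (alphaSel θbar (αbar1 / ya) ba ya)
        (xUSel θbar (αbar1 / ya) (xbar1 * ((ya : ℝ) : EReal)) ba ya)
        (xLSel θbar (αbar1 / ya) (xbar1 * ((ya : ℝ) : EReal)) ba ya) s := by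
    rw [show (0:ℝ) = ζ * 0 by ring]
    rw [← intervalIntegral.smul_integral_comp_mul_left _ ζ]
    simp only [smul_eq_mul, priceCurve_scale _ _ _ _ _ hζ, mul_zero]
  rw [hint]
  ring


end PAMM
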